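/- arXiv:2308.03242 — 2 statements merged into one kernel-verified Lean document; each statement's English description precedes it below -/
import Mathlib

section
/- Let {x_k}, {z_k} be generated by the mirror descent iteration z_{k+1} = z_k − σ s ∇f(x_k), x_{k+1} = ∇φ*(z_{k+1}), with initialization ∇φ*(z₀) = x₀, and define the discrete Lyapunov function E(k) = kσs[f(x_k) − f(x*)] + D_{φ*}(z_k, z*). Then for every k ≥ 0 and every step size s > 0, E(k+1) − E(k) ≤ (−k − 1/2 + (k+1)Ls/2) σ ‖x_{k+1} − x_k‖². -/
open Set Filter Topology
open scoped RealInnerProductSpace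

/-- The Fenchel conjugate of a function on Euclidean space. -/
noncomputable def fenchelConj {n : ℕ} (φ : EuclideanSpace ℝ (Fin n) → ℝ)
    (z : EuclideanSpace ℝ (Fin n)) : ℝ :=
  ⨆ x : EuclideanSpace ℝ (Fin n), (⟪z, x⟫ - φ x)

section MDAux

open Metric

variable {n : ℕ}

local notation "E" => EuclideanSpace ℝ (Fin n)

/-- If `u` minimizes `φ - ⟪a, ·⟫` for a `σ`-strongly convex `φ`, then the strong subgradient
inequality holds at `u` with slope `a`. -/
private lemma md_strong_subgrad {φ : E → ℝ} {σ : ℝ} (hσ : 0 < σ)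
    (hφsc : StrongConvexOn Set.univ σ φ) {a u : E}
    (hmin : ∀ y, φ u - ⟪a, u⟫ ≤ φ y - ⟪a, y⟫) (x : E) :
    φ u + ⟪a, x - u⟫ + σ / 2 * ‖x - u‖ ^ 2 ≤ φ x := by
  set c : ℝ := σ / 2 * ‖x - u‖ ^ 2 with hc
  set d : ℝ := (φ x - ⟪a, x⟫) - (φ u - ⟪a, u⟫) with hd
  have key : ∀ t : ℝ, t ∈ Ioo (0:ℝ) 1 → (1 - t) * c ≤ d := by
    intro t ht
    obtain ⟨ht0, ht1⟩ := ht
    have h1 := hφsc.2 (mem_univ x) (mem_univ u) ht0.le (by linarith : (0:ℝ) ≤ 1 - t)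
      (by ring)
    have h2 := hmin (t • x + (1 - t) • u)
    have hin : ⟪a, t • x + (1 - t) • u⟫ = t * ⟪a, x⟫ + (1 - t) * ⟪a, u⟫ := by
      rw [inner_add_right, real_inner_smul_right, real_inner_smul_right]
    simp only [smul_eq_mul] at h1
    have h3 : t * ((1 - t) * c) ≤ t * d := by
      rw [hc, hd]; nlinarith [h1, h2, hin]
    exact le_of_mul_le_mul_left h3 ht0
  have hc0 : 0 ≤ c := by positivity
  have hineq : c ≤ d := by
    by_contra hlt
    push_neg at hlt
    have hd0 : 0 ≤ d := by
      have := key (1/2) (by norm_num)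
      linarith
    have hcpos : 0 < c := lt_of_le_of_lt hd0 hlt
    have ht : (c - d) / (2 * c) ∈ Ioo (0:ℝ) 1 := by
      constructor
      · exact div_pos (by linarith) (by linarith)
      · rw [div_lt_one (by linarith)]; linarith
    have := key _ ht
    have hexp : (1 - (c - d) / (2 * c)) * c = (c + d) / 2 := by
      field_simp; ring
    rw [hexp] at this
    linarith
  have hin2 : ⟪a, x - u⟫ = ⟪a, x⟫ - ⟪a, u⟫ := inner_sub_right _ _ _
  simp only [hd] at hineq
  linarith

/-- A `σ`-strongly convex function minus a linear functional attains its minimum. -/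
private lemma md_exists_min {φ : E → ℝ} {σ : ℝ} (hσ : 0 < σ)
    (hφsc : StrongConvexOn Set.univ σ φ) (a : E) :
    ∃ u : E, ∀ y : E, φ u - ⟪a, u⟫ ≤ φ y - ⟪a, y⟫ := by
  have hconv : ConvexOn ℝ Set.univ φ :=
    hφsc.convexOn (fun r => by positivity)
  have hcont : Continuous φ := continuousOn_univ.mp
    (hconv.continuousOn isOpen_univ)
  set ψ : E → ℝ := fun y => φ y - ⟪a, y⟫ with hψ
  have hψcont : Continuous ψ := hcont.sub (continuous_const.inner continuous_id)
  have hgconv : ConvexOn ℝ Set.univ (fun y : E => φ y - σ / 2 * ‖y‖ ^ 2) :=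
    strongConvexOn_iff_convex.mp hφsc
  set g : E → ℝ := fun y => φ y - σ / 2 * ‖y‖ ^ 2 with hgdef
  have hgcont : Continuous g := hcont.sub (continuous_const.mul ((continuous_norm).pow 2))
  obtain ⟨C, hC⟩ := (isCompact_sphere (0:E) 1).exists_bound_of_continuousOn
    hgcont.continuousOn
  set D : ℝ := |C| + |g 0| with hD
  have hD0 : 0 ≤ D := by positivity
  have hlow : ∀ y : E, 1 ≤ ‖y‖ → σ / 2 * ‖y‖ ^ 2 - D * ‖y‖ - D ≤ φ y := by
    intro y hy
    have hr : (0:ℝ) < ‖y‖ := by linarith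
    have hrne : ‖y‖ ≠ 0 := ne_of_gt hr
    have husp : ‖(‖y‖⁻¹ • y : E)‖ = 1 := by
      rw [norm_smul, norm_inv, Real.norm_eq_abs, abs_of_pos hr]
      field_simp
    have hmem : (‖y‖⁻¹ • y : E) ∈ sphere (0:E) 1 := by
      simpa [mem_sphere_iff_norm] using husp
    have hgu : -|C| ≤ g (‖y‖⁻¹ • y) := by
      have h1 := hC _ hmem
      rw [Real.norm_eq_abs] at h1
      have h2 := (abs_le.mp (le_trans h1 (le_abs_self C))).1
      linarith
    have hcvx := hgconv.2 (mem_univ y) (mem_univ (0:E)) (by positivity : (0:ℝ) ≤ ‖y‖⁻¹)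
      (by rw [sub_nonneg, inv_le_one_iff₀]; right; linarith : (0:ℝ) ≤ 1 - ‖y‖⁻¹)
      (show ‖y‖⁻¹ + (1 - ‖y‖⁻¹) = 1 by ring)
    simp only [smul_zero, add_zero, smul_eq_mul] at hcvx
    have h4 := mul_le_mul_of_nonneg_left hcvx hr.le
    have h5 : ‖y‖ * (‖y‖⁻¹ * g y + (1 - ‖y‖⁻¹) * g 0) = g y + (‖y‖ - 1) * g 0 := by
      field_simp
    rw [h5] at h4
    have h6 : (‖y‖ - 1) * g 0 ≤ (‖y‖ - 1) * |g 0| :=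
      mul_le_mul_of_nonneg_left (le_abs_self _) (by linarith)
    have h7 : ‖y‖ * (-|C|) ≤ ‖y‖ * g (‖y‖⁻¹ • y) :=
      mul_le_mul_of_nonneg_left hgu hr.le
    have h8 : g y = φ y - σ / 2 * ‖y‖ ^ 2 := rfl
    have h9 : -|C| * ‖y‖ - (‖y‖ - 1) * |g 0| ≤ g y := by
      clear_value g; clear_value D; nlinarith
    have h10 : D = |C| + |g 0| := hD
    clear_value g; clear_value D
    nlinarith [abs_nonneg (g 0), abs_nonneg C, h9, h10, hy]
  set B : ℝ := D + ‖a‖ with hB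
  have hB0 : 0 ≤ B := by positivity
  set R : ℝ := max 1 (2 / σ * (B + |ψ 0| + D + 1)) with hR
  have hR1 : 1 ≤ R := le_max_left _ _
  have hout : ∀ y : E, R < ‖y‖ → ψ 0 < ψ y := by
    intro y hy
    have hr1 : 1 ≤ ‖y‖ := le_trans hR1 hy.le
    have h1 := hlow y hr1
    have h2 : ⟪a, y⟫ ≤ ‖a‖ * ‖y‖ := real_inner_le_norm a y
    have h3 : 2 / σ * (B + |ψ 0| + D + 1) ≤ R := le_max_right _ _
    have hRy : σ / 2 * R * ‖y‖ ≤ σ / 2 * ‖y‖ ^ 2 := by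
      nlinarith [mul_nonneg (mul_nonneg (half_pos hσ).le (by linarith : (0:ℝ) ≤ ‖y‖))
        (by linarith : (0:ℝ) ≤ ‖y‖ - R)]
    have hK : B + |ψ 0| + D + 1 ≤ σ / 2 * R := by
      have := mul_le_mul_of_nonneg_left h3 (le_of_lt (half_pos hσ))
      calc B + |ψ 0| + D + 1 = σ / 2 * (2 / σ * (B + |ψ 0| + D + 1)) := by
            field_simp
        _ ≤ σ / 2 * R := by nlinarith
    have hψy : ψ y = φ y - ⟪a, y⟫ := rfl
    nlinarith [le_abs_self (ψ 0), abs_nonneg (ψ 0)]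
  obtain ⟨u, humem, hu⟩ := (isCompact_closedBall (0:E) R).exists_isMinOn
    ⟨0, mem_closedBall_self (by linarith : (0:ℝ) ≤ R)⟩ hψcont.continuousOn
  refine ⟨u, fun y => ?_⟩
  by_cases hy : ‖y‖ ≤ R
  · exact hu (by simpa [mem_closedBall_zero_iff] using hy)
  · push_neg at hy
    have h0 : ψ u ≤ ψ 0 := hu (mem_closedBall_self (by linarith))
    have := hout y hy
    have : ψ u ≤ ψ y := by linarith
    exact this

/-- The key inequality: the Bregman divergence of the Fenchel conjugate of a `σ`-strongly
convex function dominates `σ/2` times the squared distance of the gradient images. -/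
private lemma md_key {φ : E → ℝ} {σ : ℝ} (hσ : 0 < σ)
    (hφsc : StrongConvexOn Set.univ σ φ) {gφs : E → E}
    (hgφs : ∀ z : E, HasGradientAt (fenchelConj φ) (gφs z) z) (a b : E) :
    σ / 2 * ‖gφs b - gφs a‖ ^ 2 ≤
      fenchelConj φ b - fenchelConj φ a - ⟪gφs a, b - a⟫ := by
  classical
  have hminex : ∀ c : E, ∃ u : E, ∀ y : E, φ u - ⟪c, u⟫ ≤ φ y - ⟪c, y⟫ :=
    fun c => md_exists_min hσ hφsc c
  set U : E → E := fun c => (hminex c).choose with hU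
  have hUmin : ∀ c y : E, φ (U c) - ⟪c, U c⟫ ≤ φ y - ⟪c, y⟫ :=
    fun c => (hminex c).choose_spec
  have hUsub : ∀ c y : E, φ (U c) + ⟪c, y - U c⟫ + σ / 2 * ‖y - U c‖ ^ 2 ≤ φ y :=
    fun c y => md_strong_subgrad hσ hφsc (hUmin c) y
  have hptbound : ∀ c y : E, ⟪c, y⟫ - φ y ≤ ⟪c, U c⟫ - φ (U c) := by
    intro c y
    have h1 := hUsub c y
    have h2 : ⟪c, y - U c⟫ = ⟪c, y⟫ - ⟪c, U c⟫ := inner_sub_right _ _ _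
    nlinarith [sq_nonneg ‖y - U c‖, norm_nonneg (y - U c)]
  have hbdd : ∀ c : E, BddAbove (Set.range fun y : E => ⟪c, y⟫ - φ y) := by
    intro c
    refine ⟨⟪c, U c⟫ - φ (U c), ?_⟩
    rintro _ ⟨y, rfl⟩
    exact hptbound c y
  have hval : ∀ c : E, fenchelConj φ c = ⟪c, U c⟫ - φ (U c) := by
    intro c
    refine le_antisymm (ciSup_le (hptbound c)) (le_ciSup (hbdd c) (U c))
  have hlb : ∀ c d : E, fenchelConj φ c + ⟪U c, d - c⟫ ≤ fenchelConj φ d := by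
    intro c d
    have h1 : ⟪d, U c⟫ - φ (U c) ≤ fenchelConj φ d := le_ciSup (hbdd d) (U c)
    have h2 : ⟪U c, d - c⟫ = ⟪d, U c⟫ - ⟪c, U c⟫ := by
      rw [real_inner_comm, inner_sub_left]
    rw [hval c]
    linarith
  have hub : ∀ c d : E, fenchelConj φ d ≤
      fenchelConj φ c + ⟪U c, d - c⟫ + 1 / (2 * σ) * ‖d - c‖ ^ 2 := by
    intro c d
    refine ciSup_le fun y => ?_
    have h1 := hUsub c y
    have h2 : ⟪d, y⟫ = ⟪c, y⟫ + ⟪d - c, y - U c⟫ + ⟪d - c, U c⟫ := by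
      rw [inner_sub_right, inner_sub_left, inner_sub_left]; ring
    have h3 : ⟪U c, d - c⟫ = ⟪d - c, U c⟫ := real_inner_comm _ _
    have h4 : ⟪c, y - U c⟫ = ⟪c, y⟫ - ⟪c, U c⟫ := inner_sub_right _ _ _
    have h5 : ⟪d - c, y - U c⟫ ≤ ‖d - c‖ * ‖y - U c‖ := real_inner_le_norm _ _
    have h6 : ‖d - c‖ * ‖y - U c‖ ≤ σ / 2 * ‖y - U c‖ ^ 2 + 1 / (2 * σ) * ‖d - c‖ ^ 2 := by
      have key : 2 * σ * (‖d - c‖ * ‖y - U c‖) ≤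
          2 * σ * (σ / 2 * ‖y - U c‖ ^ 2 + 1 / (2 * σ) * ‖d - c‖ ^ 2) := by
        have he : 2 * σ * (σ / 2 * ‖y - U c‖ ^ 2 + 1 / (2 * σ) * ‖d - c‖ ^ 2) =
            σ ^ 2 * ‖y - U c‖ ^ 2 + ‖d - c‖ ^ 2 := by field_simp
        rw [he]; nlinarith [sq_nonneg (σ * ‖y - U c‖ - ‖d - c‖)]
      exact le_of_mul_le_mul_left key (by positivity)
    rw [hval c]
    linarith
  have hgrad : ∀ c : E, HasGradientAt (fenchelConj φ) (U c) c := by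
    intro c
    rw [hasGradientAt_iff_isLittleO, Asymptotics.isLittleO_iff]
    intro ε hε
    have hball : Metric.ball c (2 * σ * ε) ∈ 𝓝 c :=
      Metric.ball_mem_nhds _ (by positivity)
    filter_upwards [hball] with d hd
    have hdist : ‖d - c‖ ≤ 2 * σ * ε := by
      have := mem_ball_iff_norm.mp hd
      linarith
    have h1 := hlb c d
    have h2 := hub c d
    rw [Real.norm_eq_abs, abs_le]
    have hn : 0 ≤ ‖d - c‖ := norm_nonneg _
    have hsq : 1 / (2 * σ) * ‖d - c‖ ^ 2 ≤ ε * ‖d - c‖ := by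
      rw [div_mul_eq_mul_div, div_le_iff₀ (by positivity)]
      nlinarith
    have hεn : (0:ℝ) ≤ ε * ‖d - c‖ := by positivity
    constructor
    · linarith
    · linarith
  have hUeq : ∀ c : E, U c = gφs c := fun c => (hgrad c).unique (hgφs c)
  set u : E := gφs a with hu
  set v : E := gφs b with hv
  have hva : fenchelConj φ a = ⟪a, u⟫ - φ u := by rw [hval a, hUeq a]
  have hvb : fenchelConj φ b = ⟪b, v⟫ - φ v := by rw [hval b, hUeq b]
  have hsub := hUsub b u
  rw [hUeq b] at hsub
  have h1 : ⟪b, u - v⟫ = ⟪b, u⟫ - ⟪b, v⟫ := inner_sub_right _ _ _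
  have h2 : ⟪u, b - a⟫ = ⟪b, u⟫ - ⟪a, u⟫ := by
    rw [inner_sub_right]
    rw [real_inner_comm u b, real_inner_comm u a]
  have h3 : ‖u - v‖ = ‖v - u‖ := norm_sub_rev _ _
  rw [hva, hvb]
  rw [h3] at hsub
  linarith

/-- Derivative of a function along a line, in terms of the gradient. -/
private lemma md_line_deriv {f : E → ℝ} {f' : E → E}
    (hfd : ∀ x, HasGradientAt f (f' x) x) (x d : E) (t : ℝ) :
    HasDerivAt (fun t : ℝ => f (x + t • d)) ⟪f' (x + t • d), d⟫ t := by
  have hc : HasDerivAt (fun t : ℝ => x + t • d) d t := by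
    simpa using ((hasDerivAt_id t).smul_const d).const_add x
  have hf := (hfd (x + t • d)).hasFDerivAt
  have := hf.comp_hasDerivAt t hc
  simpa [InnerProductSpace.toDual_apply_apply, Function.comp_def] using this

/-- Gradient inequality for convex differentiable functions. -/
private lemma md_convex_grad {f : E → ℝ} {f' : E → E}
    (hfconv : ConvexOn ℝ Set.univ f) (hfd : ∀ x, HasGradientAt f (f' x) x) (x y : E) :
    f x + ⟪f' x, y - x⟫ ≤ f y := by
  set d : E := y - x with hd
  set g : ℝ → ℝ := fun t => f (x + t • d) with hg
  have hg0 : g 0 = f x := by simp [hg]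
  have hgd : HasDerivAt g ⟪f' x, d⟫ 0 := by
    have := md_line_deriv hfd x d 0
    simpa using this
  have hslope : Tendsto (slope g 0) (𝓝[>] 0) (𝓝 ⟪f' x, d⟫) :=
    (hasDerivAt_iff_tendsto_slope.mp hgd).mono_left
      (nhdsWithin_mono 0 (fun t ht => ne_of_gt ht))
  have hbound : ∀ᶠ t in 𝓝[>] (0:ℝ), slope g 0 t ≤ f y - f x := by
    filter_upwards [Ioo_mem_nhdsGT_of_mem (⟨le_refl 0, zero_lt_one⟩ : (0:ℝ) ∈ Ico 0 1)]
      with t ht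
    obtain ⟨ht0, ht1⟩ := ht
    have hcvx := hfconv.2 (mem_univ y) (mem_univ x) ht0.le (by linarith : (0:ℝ) ≤ 1 - t)
      (show t + (1 - t) = 1 by ring)
    have hpt : t • y + (1 - t) • x = x + t • d := by
      rw [hd, smul_sub, sub_smul, one_smul]
      abel
    rw [hpt] at hcvx
    simp only [smul_eq_mul] at hcvx
    rw [slope_def_field]
    rw [hg0]
    have : g t = f (x + t • d) := rfl
    rw [div_le_iff₀ (by linarith : (0:ℝ) < t - 0)]
    rw [this]
    nlinarith
  have := le_of_tendsto hslope hbound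
  linarith

/-- Descent inequality for functions with Lipschitz gradient. -/
private lemma md_smooth {f : E → ℝ} {f' : E → E} {L : ℝ}
    (hfd : ∀ x, HasGradientAt f (f' x) x)
    (hfL : ∀ x y, ‖f' x - f' y‖ ≤ L * ‖x - y‖) (x y : E) :
    f y ≤ f x + ⟪f' x, y - x⟫ + L / 2 * ‖y - x‖ ^ 2 := by
  set d : E := y - x with hd
  set h : ℝ → ℝ := fun t => f (x + t • d) - t * ⟪f' x, d⟫ - L * ‖d‖ ^ 2 * t ^ 2 / 2 with hh
  have hder : ∀ t : ℝ, HasDerivAt h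
      (⟪f' (x + t • d), d⟫ - ⟪f' x, d⟫ - L * ‖d‖ ^ 2 * t) t := by
    intro t
    have h1 := md_line_deriv hfd x d t
    have h2 : HasDerivAt (fun t : ℝ => t * ⟪f' x, d⟫) ⟪f' x, d⟫ t := by
      simpa using (hasDerivAt_id t).mul_const ⟪f' x, d⟫
    have h3 : HasDerivAt (fun t : ℝ => L * ‖d‖ ^ 2 * t ^ 2 / 2) (L * ‖d‖ ^ 2 * t) t := by
      have := ((hasDerivAt_pow 2 t).const_mul (L * ‖d‖ ^ 2)).div_const 2
      convert this using 1
      · rfl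
      · rfl
      · norm_num
        ring
    exact (h1.sub h2).sub h3
  have hcont : Continuous h := by
    apply continuous_iff_continuousAt.mpr
    intro t
    exact (hder t).differentiableAt.continuousAt
  have hanti : AntitoneOn h (Icc 0 1) := by
    apply antitoneOn_of_deriv_nonpos (convex_Icc 0 1) hcont.continuousOn
      (fun t _ => (hder t).differentiableAt.differentiableWithinAt)
    intro t ht
    rw [interior_Icc] at ht
    obtain ⟨ht0, ht1⟩ := ht
    rw [(hder t).deriv]
    have h4 : ⟪f' (x + t • d) - f' x, d⟫ = ⟪f' (x + t • d), d⟫ - ⟪f' x, d⟫ :=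
      inner_sub_left _ _ _
    have h5 : ⟪f' (x + t • d) - f' x, d⟫ ≤ ‖f' (x + t • d) - f' x‖ * ‖d‖ :=
      real_inner_le_norm _ _
    have h6 : ‖f' (x + t • d) - f' x‖ ≤ L * ‖(x + t • d) - x‖ := hfL _ _
    have h7 : ‖(x + t • d) - x‖ = t * ‖d‖ := by
      rw [add_sub_cancel_left, norm_smul, Real.norm_eq_abs, abs_of_pos ht0]
    have hn : (0:ℝ) ≤ ‖d‖ := norm_nonneg _
    rw [h7] at h6
    nlinarith
  have h01 := hanti (left_mem_Icc.mpr zero_le_one) (right_mem_Icc.mpr zero_le_one) zero_le_one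
  have hh0 : h 0 = f x := by simp [hh]
  have hxy : x + d = y := by rw [hd]; abel
  have hh1 : h 1 = f y - ⟪f' x, d⟫ - L * ‖d‖ ^ 2 / 2 := by
    simp only [hh, one_smul, one_pow, mul_one, one_mul, hxy]
  rw [hh0, hh1] at h01
  have : ‖y - x‖ = ‖d‖ := rfl
  rw [this]
  linarith

end MDAux

set_option maxHeartbeats 2000000 in
/-- The discrete Lyapunov function `E(k) = kσs[f(x_k) − f(x*)] + D_{φ*}(z_k, z*)` of mirror
descent satisfies `E(k+1) − E(k) ≤ (−k − 1/2 + (k+1)Ls/2)σ‖x_{k+1} − x_k‖²` for every step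
size `s > 0`. -/
theorem mirror_descent_lyapunov_difference
{n : ℕ} (f φ : EuclideanSpace ℝ (Fin n) → ℝ)
    (f' gφs : EuclideanSpace ℝ (Fin n) → EuclideanSpace ℝ (Fin n))
    (σ L s : ℝ) (hσ : 0 < σ)
    -- f is convex and differentiable with L-Lipschitz gradient
    (hfconv : ConvexOn ℝ Set.univ f)
    (hfd : ∀ x, HasGradientAt f (f' x) x)
    (hfL : ∀ x y, ‖f' x - f' y‖ ≤ L * ‖x - y‖)
    -- φ is σ-strongly convex
    (hφsc : StrongConvexOn Set.univ σ φ)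
    -- φ* is differentiable with gradient gφs
    (hgφs : ∀ z, HasGradientAt (fenchelConj φ) (gφs z) z)
    -- the mirror descent iteration
    (x z : ℕ → EuclideanSpace ℝ (Fin n))
    (hz : ∀ k : ℕ, z (k + 1) = z k - (σ * s) • f' (x k))
    (hx : ∀ k : ℕ, x (k + 1) = gφs (z (k + 1)))
    (hx0 : gφs (z 0) = x 0)
    -- x* is a global minimizer of f and ∇φ*(z*) = x*
    (xs zs : EuclideanSpace ℝ (Fin n))
    (hxs : ∀ w, f xs ≤ f w) (hzs : gφs zs = xs)
    (hs : 0 < s) :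
    ∀ k : ℕ,
      (((k : ℝ) + 1) * σ * s * (f (x (k + 1)) - f xs) +
          (fenchelConj φ (z (k + 1)) - fenchelConj φ zs - ⟪gφs zs, z (k + 1) - zs⟫)) -
        ((k : ℝ) * σ * s * (f (x k) - f xs) +
          (fenchelConj φ (z k) - fenchelConj φ zs - ⟪gφs zs, z k - zs⟫))
        ≤ (-(k : ℝ) - 1 / 2 + ((k : ℝ) + 1) * L * s / 2) * σ * ‖x (k + 1) - x k‖ ^ 2 := by
  intro k
  rw [hzs]
  have hgu : gφs (z k) = x k := by
    cases k with
    | zero => exact hx0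
    | succ m => exact (hx m).symm
  have hgv : gφs (z (k + 1)) = x (k + 1) := (hx k).symm
  have key1 := md_key hσ hφsc hgφs (z (k + 1)) (z k)
  have key2 := md_key hσ hφsc hgφs (z k) (z (k + 1))
  rw [hgu, hgv] at key1 key2
  set u : EuclideanSpace ℝ (Fin n) := x k with hu
  set v : EuclideanSpace ℝ (Fin n) := x (k + 1) with hv
  have e1 : z k - z (k + 1) = (σ * s) • f' u := by rw [hz k]; abel
  have e2 : z (k + 1) - z k = -((σ * s) • f' u) := by rw [hz k]; abel
  have hnrev : ‖u - v‖ = ‖v - u‖ := norm_sub_rev _ _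
  rw [hnrev] at key1
  have i1 : ⟪v, z k - z (k + 1)⟫ = σ * s * ⟪f' u, v⟫ := by
    rw [e1, real_inner_smul_right, real_inner_comm]
  have i2 : ⟪u, z (k + 1) - z k⟫ = -(σ * s * ⟪f' u, u⟫) := by
    rw [e2, inner_neg_right, real_inner_smul_right, real_inner_comm]
  have i3 : ⟪xs, z (k + 1) - z k⟫ = -(σ * s * ⟪f' u, xs⟫) := by
    rw [e2, inner_neg_right, real_inner_smul_right, real_inner_comm]
  rw [i1] at key1
  rw [i2] at key2
  set A0 := fenchelConj φ (z k) with hA0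
  set A1 := fenchelConj φ (z (k + 1)) with hA1
  set As := fenchelConj φ zs with hAs
  set N := ‖v - u‖ ^ 2 with hN
  set P := ⟪f' u, v - u⟫ with hP
  set Q := ⟪f' u, xs - u⟫ with hQ
  have iP : σ * s * P = σ * s * ⟪f' u, v⟫ - σ * s * ⟪f' u, u⟫ := by
    rw [hP, inner_sub_right]; ring
  have iQ : σ * s * Q = σ * s * ⟪f' u, xs⟫ - σ * s * ⟪f' u, u⟫ := by
    rw [hQ, inner_sub_right]; ring
  -- key1 : σ/2 * N ≤ A0 - A1 - σ*s*⟪f' u, v⟫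
  -- key2 : σ/2 * N ≤ A1 - A0 - -(σ*s*⟪f' u, u⟫)
  have h4 : σ * s * P ≤ -(σ * N) := by linarith
  have h1 : A1 - A0 - ⟪xs, z (k + 1) - z k⟫ ≤ σ * s * Q - σ * s * P - σ / 2 * N := by
    rw [i3]; linarith
  have iI : ⟪xs, z (k + 1) - zs⟫ - ⟪xs, z k - zs⟫ = ⟪xs, z (k + 1) - z k⟫ := by
    rw [← inner_sub_right]
    congr 1
    abel
  have h2 : Q ≤ f xs - f u := by
    have := md_convex_grad hfconv hfd u xs
    rw [← hQ] at this
    linarith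
  have h3 : f v - f u ≤ P + L / 2 * N := by
    have := md_smooth hfd hfL u v
    rw [← hP, ← hN] at this
    linarith
  have hk0 : (0:ℝ) ≤ (k:ℝ) := Nat.cast_nonneg k
  have hσs : (0:ℝ) < σ * s := mul_pos hσ hs
  have h5 : (k:ℝ) * σ * s * (f v - f u) ≤ (k:ℝ) * σ * s * (P + L / 2 * N) := by
    have := mul_le_mul_of_nonneg_left h3 (by positivity : (0:ℝ) ≤ (k:ℝ) * σ * s)
    linarith
  have h6 : (k:ℝ) * (σ * s * P) ≤ (k:ℝ) * (-(σ * N)) :=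
    mul_le_mul_of_nonneg_left h4 hk0
  have h7 : σ * s * Q ≤ σ * s * (f xs - f u) :=
    mul_le_mul_of_nonneg_left h2 hσs.le
  have h8 : σ * s * (f v - f u) ≤ σ * s * (P + L / 2 * N) :=
    mul_le_mul_of_nonneg_left h3 hσs.le
  nlinarith [h1, h5, h6, h7, h8, iI]
end

section
/- Let X, Z : (0,∞) → ℝⁿ solve the high-resolution accelerated mirror descent ODE Ż(t) = −(tσ/2)∇f(X(t)), Ẋ(t) = (2/t)∇φ*(Z(t)) − (2/t)X(t) − √s ∇f(X(t)), with X(0) = x₀, Z(0) = z₀, ∇φ*(z₀) = x₀, Ẋ(0) = 0, where s > 0 is fixed. Then inf_{0 ≤ u ≤ t} ‖∇f(X(u))‖² = o(1/t³) as t → ∞; that is, t³ · inf_{0 ≤ u ≤ t} ‖∇f(X(u))‖² → 0 as t → ∞. -/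
open Set Filter Topology
open scoped RealInnerProductSpace

section AuxLemmas
variable {n : ℕ}
local notation "E" => EuclideanSpace ℝ (Fin n)

lemma grad_convex_ineq {f : E → ℝ} (hf : ConvexOn ℝ Set.univ f)
    {x g : E} (hg : HasGradientAt f g x) (y : E) :
    f x + ⟪g, y - x⟫ ≤ f y := by
  have hx0 : x + (0:ℝ) • (y - x) = x := by simp
  have hc : HasDerivAt (fun τ : ℝ => x + τ • (y - x)) (y - x) 0 := by
    simpa using ((hasDerivAt_id (0:ℝ)).smul_const (y - x)).const_add x
  have hG : HasDerivAt (fun τ : ℝ => f (x + τ • (y - x))) ⟪g, y - x⟫ 0 := by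
    have h1 := (hx0 ▸ hg.hasFDerivAt).comp_hasDerivAt 0 hc
    simp at h1; exact h1
  have hslope := hasDerivAt_iff_tendsto_slope.mp hG
  have hmono : 𝓝[>] (0:ℝ) ≤ 𝓝[≠] (0:ℝ) :=
    nhdsWithin_mono _ fun τ hτ => ne_of_gt hτ
  have hle : ⟪g, y - x⟫ ≤ f y - f x := by
    refine le_of_tendsto (hslope.mono_left hmono) ?_
    filter_upwards [Ioc_mem_nhdsGT_of_mem (by constructor <;> norm_num :
      (0:ℝ) ∈ Ico (0:ℝ) 1)] with τ hτ
    have hτ0 : 0 < τ := hτ.1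
    have hcomb : x + τ • (y - x) = (1 - τ) • x + τ • y := by
      rw [smul_sub, sub_smul, one_smul]; abel
    have hcv := hf.2 (mem_univ x) (mem_univ y) (by linarith [hτ.2] : (0:ℝ) ≤ 1 - τ) hτ0.le
      (by ring)
    rw [← hcomb] at hcv
    simp only [smul_eq_mul] at hcv
    rw [slope_def_field, sub_zero, hx0, div_le_iff₀ hτ0]
    linarith
  linarith

lemma strongconvex_bddBelow {σ : ℝ} (hσ : 0 < σ) {h : E → ℝ}
    (hh : StrongConvexOn Set.univ σ h) : ∃ C, ∀ x, C ≤ h x := by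
  have hconv : ConvexOn ℝ Set.univ h := hh.convexOn (fun r => by positivity)
  have hcont : Continuous h :=
    continuousOn_univ.mp (hconv.continuousOn isOpen_univ)
  obtain ⟨xm, _, hmin⟩ := (isCompact_closedBall (0:E) 1).exists_isMinOn
    ⟨0, by simp⟩ hcont.continuousOn
  set m := h xm with hm
  set h0 := h (0:E) with hh0
  refine ⟨min m (h0 - (m - h0 - σ/2)^2 / (2*σ)), fun x => ?_⟩
  by_cases hx : ‖x‖ ≤ 1
  · exact le_trans (min_le_left _ _) (hmin (by simpa using hx))
  · push_neg at hx
    set R := ‖x‖ with hR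
    have hR0 : (0:ℝ) < R := lt_trans one_pos hx
    have key := hh.2 (mem_univ x) (mem_univ (0:E))
      (show (0:ℝ) ≤ 1/R by positivity)
      (show (0:ℝ) ≤ 1 - 1/R by rw [sub_nonneg, div_le_one hR0]; exact hx.le)
      (show 1/R + (1 - 1/R) = 1 by ring)
    have hnorm : ‖(1/R) • x‖ = 1 := by
      rw [norm_smul, Real.norm_eq_abs, abs_of_pos (by positivity : (0:ℝ) < 1/R), ← hR]
      field_simp
    have hmem : (1/R) • x ∈ Metric.closedBall (0:E) 1 := by
      rw [Metric.mem_closedBall, dist_zero_right, hnorm]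
    have hmle : m ≤ h ((1/R) • x) := hmin hmem
    simp only [smul_zero, add_zero, sub_zero, smul_eq_mul] at key
    -- key : h ((1/R) • x) ≤ (1/R) * h x + (1 - 1/R) * h0 - (1/R)*(1-1/R)*(σ/2 * ‖x‖^2)
    rw [← hR] at key
    have e1 : m ≤ (1/R) * h x + (1 - 1/R) * h0 - (1/R)*(1-1/R)*(σ/2 * R^2) :=
      le_trans hmle key
    have hinv : R * (1/R) = 1 := by field_simp
    have e2 : R * m ≤ h x + (R - 1) * h0 - σ/2*(R^2 - R) := by
      have h' := mul_le_mul_of_nonneg_left e1 hR0.le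
      have e3 : R * (1/R * h x + (1 - 1/R) * h0 - 1/R*(1-1/R)*(σ/2 * R^2))
          = h x + (R - 1) * h0 - σ/2*(R^2 - R) := by
        field_simp
      rw [e3] at h'
      exact h'
    refine le_trans (min_le_right _ _) ?_
    rw [sub_le_iff_le_add, ← sub_le_iff_le_add',
      le_div_iff₀ (by positivity : (0:ℝ) < 2*σ)]
    nlinarith [sq_nonneg (m - h0 + σ*R - σ/2), e2, hσ, hR0]

lemma fenchel_bddAbove {σ : ℝ} (hσ : 0 < σ) {φ : E → ℝ}
    (hφ : StrongConvexOn Set.univ σ φ) (z : E) :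
    BddAbove (Set.range fun x : E => ⟪z, x⟫ - φ x) := by
  have hlin : UniformConcaveOn Set.univ 0 (fun x : E => ⟪z, x⟫) := by
    refine ⟨convex_univ, fun x _ y _ a b ha hb hab => ?_⟩
    have h1 : ⟪z, a • x + b • y⟫ = a * ⟪z, x⟫ + b * ⟪z, y⟫ := by
      rw [inner_add_right, real_inner_smul_right, real_inner_smul_right]
    simp [h1, smul_eq_mul]
  have hsub : StrongConvexOn Set.univ σ (φ - fun x : E => ⟪z, x⟫) := by
    have := hφ.sub hlin
    simp at this; exact this
  obtain ⟨C, hC⟩ := strongconvex_bddBelow hσ hsub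
  refine ⟨-C, ?_⟩
  rintro _ ⟨x, rfl⟩
  have := hC x
  simp only [Pi.sub_apply] at this
  show ⟪z, x⟫ - φ x ≤ -C
  linarith

lemma le_fenchelConj {σ : ℝ} (hσ : 0 < σ) {φ : E → ℝ}
    (hφ : StrongConvexOn Set.univ σ φ) (z x : E) :
    ⟪z, x⟫ - φ x ≤ fenchelConj φ z :=
  le_ciSup (fenchel_bddAbove hσ hφ z) x

lemma fenchelConj_convexOn {σ : ℝ} (hσ : 0 < σ) {φ : E → ℝ}
    (hφ : StrongConvexOn Set.univ σ φ) :
    ConvexOn ℝ Set.univ (fenchelConj φ) := by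
  refine ⟨convex_univ, fun z1 _ z2 _ a b ha hb hab => ?_⟩
  refine ciSup_le fun x => ?_
  have heq : ⟪a • z1 + b • z2, x⟫ - φ x
      = a * (⟪z1, x⟫ - φ x) + b * (⟪z2, x⟫ - φ x) := by
    rw [inner_add_left, real_inner_smul_left, real_inner_smul_left]
    linear_combination (φ x) * hab
  rw [heq]
  simp only [smul_eq_mul]
  exact add_le_add
    (mul_le_mul_of_nonneg_left (le_fenchelConj hσ hφ z1 x) ha)
    (mul_le_mul_of_nonneg_left (le_fenchelConj hσ hφ z2 x) hb)

end AuxLemmas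

set_option maxHeartbeats 1000000 in
/-- Along the high-resolution accelerated mirror descent ODE,
`inf_{0 ≤ u ≤ t} ‖∇f(X(u))‖² = o(1/t³)` as `t → ∞`. -/
theorem accelerated_mirror_flow_gradient_rate
{n : ℕ} (f φ : EuclideanSpace ℝ (Fin n) → ℝ)
    (f' gφs : EuclideanSpace ℝ (Fin n) → EuclideanSpace ℝ (Fin n))
    (σ L s : ℝ) (hσ : 0 < σ) (hs : 0 < s)
    -- f is convex and differentiable with L-Lipschitz gradient
    (hfconv : ConvexOn ℝ Set.univ f)
    (hfd : ∀ x, HasGradientAt f (f' x) x)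
    (hfL : ∀ x y, ‖f' x - f' y‖ ≤ L * ‖x - y‖)
    -- φ is σ-strongly convex
    (hφsc : StrongConvexOn Set.univ σ φ)
    -- φ* is differentiable with gradient gφs
    (hgφs : ∀ z, HasGradientAt (fenchelConj φ) (gφs z) z)
    -- the solution of the high-resolution accelerated mirror descent ODE
    (X Z X' Z' : ℝ → EuclideanSpace ℝ (Fin n))
    (x₀ z₀ xs zs : EuclideanSpace ℝ (Fin n))
    (hX : ∀ t, 0 < t → HasDerivAt X (X' t) t)
    (hZ : ∀ t, 0 < t → HasDerivAt Z (Z' t) t)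
    (hflow₁ : ∀ t, 0 < t → Z' t = -((t * σ) / 2) • f' (X t))
    (hflow₂ : ∀ t, 0 < t →
      X' t = (2 / t) • gφs (Z t) - (2 / t) • X t - Real.sqrt s • f' (X t))
    (hX0 : X 0 = x₀) (hZ0 : Z 0 = z₀) (hx₀ : gφs z₀ = x₀) (hX'0 : X' 0 = 0)
    -- x* is a global minimizer of f and ∇φ*(z*) = x*
    (hxs : ∀ w, f xs ≤ f w) (hzs : gφs zs = xs) :
    Tendsto (fun t : ℝ => t ^ 3 * sInf ((fun u => ‖f' (X u)‖ ^ 2) '' Set.Icc 0 t))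
      atTop (𝓝 0) := by
  have hψconv : ConvexOn ℝ Set.univ (fenchelConj φ) := fenchelConj_convexOn hσ hφsc
  -- Bregman divergence of the conjugate is nonnegative
  have hD : ∀ z, (0:ℝ) ≤ fenchelConj φ z - fenchelConj φ zs - ⟪xs, z - zs⟫ := by
    intro z
    have h1 := grad_convex_ineq hψconv (hgφs zs) z
    rw [hzs] at h1
    linarith
  -- notation
  set c : ℝ := σ * Real.sqrt s / 4 with hc
  have hsqs : 0 < Real.sqrt s := Real.sqrt_pos.mpr hs
  have hcpos : 0 < c := by positivity
  set h : ℝ → ℝ := fun t => t ^ 2 * ‖f' (X t)‖ ^ 2 with hh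
  set E0 : ℝ → ℝ := fun t =>
    σ/4 * t^2 * (f (X t) - f xs)
      + (fenchelConj φ (Z t) - fenchelConj φ zs - ⟪xs, Z t - zs⟫) with hE0
  have hE0nonneg : ∀ t, 0 ≤ E0 t := by
    intro t
    have h1 := hxs (X t)
    have h2 := hD (Z t)
    have h3 : (0:ℝ) ≤ σ/4 * t^2 * (f (X t) - f xs) := by
      have : (0:ℝ) ≤ f (X t) - f xs := by linarith
      positivity
    simp only [hE0]
    linarith
  -- derivative of the energy
  have hE0d : ∀ t, 0 < t → HasDerivAt E0
      (σ/4 * (2*t) * (f (X t) - f xs) + σ/4 * t^2 * ⟪f' (X t), X' t⟫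
        + (⟪gφs (Z t), Z' t⟫ - ⟪xs, Z' t⟫)) t := by
    intro t ht
    have hfX : HasDerivAt (fun u => f (X u)) ⟪f' (X t), X' t⟫ t := by
      have h1 := (hfd (X t)).hasFDerivAt.comp_hasDerivAt t (hX t ht)
      simp at h1; exact h1
    have hψZ : HasDerivAt (fun u => fenchelConj φ (Z u)) ⟪gφs (Z t), Z' t⟫ t := by
      have h1 := (hgφs (Z t)).hasFDerivAt.comp_hasDerivAt t (hZ t ht)
      simp at h1; exact h1
    have hinner : HasDerivAt (fun u => ⟪xs, Z u - zs⟫) ⟪xs, Z' t⟫ t := by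
      have h1 := ((innerSL ℝ xs).hasFDerivAt.comp_hasDerivAt t ((hZ t ht).sub_const zs))
      simp at h1; exact h1
    have hpoly : HasDerivAt (fun u : ℝ => σ/4 * u^2) (σ/4 * (2*t)) t := by
      simpa [mul_comm] using (hasDerivAt_pow 2 t).const_mul (σ/4)
    have hprod := hpoly.mul (hfX.sub_const (f xs))
    have hsum := hprod.add ((hψZ.sub_const (fenchelConj φ zs)).sub hinner)
    exact hsum
  -- energy decay inequality
  have hkey : ∀ t, 0 < t →
      σ/4 * (2*t) * (f (X t) - f xs) + σ/4 * t^2 * ⟪f' (X t), X' t⟫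
        + (⟪gφs (Z t), Z' t⟫ - ⟪xs, Z' t⟫) ≤ -(c * h t) := by
    intro t ht
    have ht' : t ≠ 0 := ne_of_gt ht
    have hXin : ⟪f' (X t), X' t⟫
        = 2/t * ⟪f' (X t), gφs (Z t)⟫ - 2/t * ⟪f' (X t), X t⟫
          - Real.sqrt s * ‖f' (X t)‖^2 := by
      rw [hflow₂ t ht, inner_sub_right, inner_sub_right, real_inner_smul_right,
        real_inner_smul_right, real_inner_smul_right, real_inner_self_eq_norm_sq]
    have hZin1 : ⟪gφs (Z t), Z' t⟫ = -((t*σ)/2) * ⟪f' (X t), gφs (Z t)⟫ := by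
      rw [hflow₁ t ht, real_inner_smul_right, real_inner_comm]
    have hZin2 : ⟪xs, Z' t⟫ = -((t*σ)/2) * ⟪f' (X t), xs⟫ := by
      rw [hflow₁ t ht, real_inner_smul_right, real_inner_comm]
    have hconv2 : f (X t) - f xs ≤ ⟪f' (X t), X t⟫ - ⟪f' (X t), xs⟫ := by
      have h3 := grad_convex_ineq hfconv (hfd (X t)) xs
      rw [inner_sub_right] at h3
      linarith
    rw [hXin, hZin1, hZin2]
    have hexp : σ/4 * (2*t) * (f (X t) - f xs)
        + σ/4 * t^2 * (2/t * ⟪f' (X t), gφs (Z t)⟫ - 2/t * ⟪f' (X t), X t⟫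
          - Real.sqrt s * ‖f' (X t)‖^2)
        + (-((t*σ)/2) * ⟪f' (X t), gφs (Z t)⟫ - -((t*σ)/2) * ⟪f' (X t), xs⟫)
        = σ*t/2 * ((f (X t) - f xs) - (⟪f' (X t), X t⟫ - ⟪f' (X t), xs⟫))
          - c * h t := by
      simp only [hc, hh]
      field_simp
      ring
    rw [hexp]
    have h4 : σ*t/2 * ((f (X t) - f xs) - (⟪f' (X t), X t⟫ - ⟪f' (X t), xs⟫)) ≤ 0 :=
      mul_nonpos_of_nonneg_of_nonpos (by positivity) (by linarith)
    linarith
  -- continuity of h on (0, ∞)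
  have hf'cont : Continuous f' := by
    have hlip : LipschitzWith (Real.toNNReal (max L 0)) f' := by
      apply LipschitzWith.of_dist_le_mul
      intro x y
      have h1 := le_trans (hfL x y) (mul_le_mul_of_nonneg_right (le_max_left L 0) (norm_nonneg _))
      rw [dist_eq_norm, dist_eq_norm]
      calc ‖f' x - f' y‖ ≤ max L 0 * ‖x - y‖ := h1
      _ = (Real.toNNReal (max L 0) : ℝ) * ‖x - y‖ := by
          rw [Real.coe_toNNReal _ (le_max_right L 0)]
    exact hlip.continuous
  have hXcont : ContinuousOn X (Ioi 0) := fun t ht =>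
    (hX t ht).continuousAt.continuousWithinAt
  have hhcont : ContinuousOn h (Ioi 0) := by
    simp only [hh]
    exact (continuous_pow 2).continuousOn.mul
      (((hf'cont.comp_continuousOn hXcont).norm).pow 2)
  have hhnonneg : ∀ u : ℝ, 0 ≤ h u := fun u => by simp only [hh]; positivity
  -- interval integrability
  have hIint : ∀ a b : ℝ, 0 < a → 0 < b → IntervalIntegrable h MeasureTheory.volume a b := by
    intro a b ha hb
    apply ContinuousOn.intervalIntegrable
    apply hhcont.mono
    intro x hx
    exact lt_of_lt_of_le (lt_min ha hb) hx.1
  set I : ℝ → ℝ := fun t => ∫ u in (1:ℝ)..t, h u with hI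
  have hId : ∀ t, 0 < t → HasDerivAt I (h t) t := by
    intro t ht
    exact intervalIntegral.integral_hasDerivAt_right (hIint 1 t one_pos ht)
      (ContinuousOn.stronglyMeasurableAtFilter isOpen_Ioi hhcont t ht)
      (hhcont.continuousAt (isOpen_Ioi.mem_nhds ht))
  -- F is antitone on [1, ∞)
  set F : ℝ → ℝ := fun t => E0 t + c * I t with hF
  have hFd : ∀ t, 0 < t → HasDerivAt F
      (σ/4 * (2*t) * (f (X t) - f xs) + σ/4 * t^2 * ⟪f' (X t), X' t⟫
        + (⟪gφs (Z t), Z' t⟫ - ⟪xs, Z' t⟫) + c * h t) t := fun t ht =>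
    (hE0d t ht).add ((hId t ht).const_mul c)
  have hFanti : AntitoneOn F (Ici 1) := by
    apply antitoneOn_of_deriv_nonpos (convex_Ici 1)
    · intro t ht
      exact (hFd t (lt_of_lt_of_le one_pos ht)).continuousAt.continuousWithinAt
    · rw [interior_Ici]
      intro t ht
      exact (hFd t (lt_trans one_pos ht)).differentiableAt.differentiableWithinAt
    · rw [interior_Ici]
      intro t ht
      have ht0 : 0 < t := lt_trans one_pos ht
      rw [(hFd t ht0).deriv]
      have := hkey t ht0
      linarith
  -- uniform bound on the integral
  have hIbound : ∀ t, 1 ≤ t → c * I t ≤ E0 1 := by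
    intro t ht
    have h1 : F t ≤ F 1 := hFanti (Set.mem_Ici.mpr le_rfl) ht ht
    have h2 : I 1 = 0 := intervalIntegral.integral_same
    have h3 := hE0nonneg t
    simp only [hF, h2, mul_zero, add_zero] at h1
    linarith
  -- I is monotone for arguments ≥ 1
  have hImono : ∀ a b : ℝ, 1 ≤ a → a ≤ b → I a ≤ I b := by
    intro a b ha hab
    have ha0 : (0:ℝ) < a := lt_of_lt_of_le one_pos ha
    have hb0 : (0:ℝ) < b := lt_of_lt_of_le ha0 hab
    have hsub : I b - I a = ∫ u in a..b, h u :=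
      intervalIntegral.integral_interval_sub_left (hIint 1 b one_pos hb0)
        (hIint 1 a one_pos ha0)
    have hpos : 0 ≤ ∫ u in a..b, h u :=
      intervalIntegral.integral_nonneg hab (fun u _ => hhnonneg u)
    linarith
  -- the limit of I
  set J : ℝ → ℝ := fun t => I (max 1 t) with hJ
  have hJmono : Monotone J := by
    intro a b hab
    exact hImono _ _ (le_max_left 1 a) (max_le_max le_rfl hab)
  have hJbdd : BddAbove (Set.range J) := by
    refine ⟨E0 1 / c, ?_⟩
    rintro _ ⟨t, rfl⟩
    rw [le_div_iff₀ hcpos]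
    have := hIbound (max 1 t) (le_max_left 1 t)
    simp only [hJ]
    linarith
  have hJten : Tendsto J atTop (𝓝 (⨆ t, J t)) := tendsto_atTop_ciSup hJmono hJbdd
  have hIten : Tendsto I atTop (𝓝 (⨆ t, J t)) := by
    apply hJten.congr'
    filter_upwards [eventually_ge_atTop (1:ℝ)] with t ht
    simp only [hJ, max_eq_right ht]
  have hIhalf : Tendsto (fun t => I (t/2)) atTop (𝓝 (⨆ t, J t)) := by
    apply hIten.comp
    exact Tendsto.atTop_div_const two_pos tendsto_id
  have htail : Tendsto (fun t => I t - I (t/2)) atTop (𝓝 0) := by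
    have := hIten.sub hIhalf
    simpa using this
  -- squeeze
  apply squeeze_zero' (g := fun t => 8 * (I t - I (t/2)))
  · filter_upwards [eventually_ge_atTop (2:ℝ)] with t ht2
    have ht0 : (0:ℝ) < t := by linarith
    have hnonneg : 0 ≤ sInf ((fun u => ‖f' (X u)‖ ^ 2) '' Set.Icc 0 t) := by
      apply Real.sInf_nonneg
      rintro _ ⟨v, _, rfl⟩
      positivity
    positivity
  · filter_upwards [eventually_ge_atTop (2:ℝ)] with t ht2
    have ht0 : (0:ℝ) < t := by linarith
    have hhalfpos : (0:ℝ) < t/2 := by linarith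
    obtain ⟨u, hu, humin⟩ := (isCompact_Icc (a := t/2) (b := t)).exists_isMinOn
      ⟨t, by constructor <;> linarith⟩
      (hhcont.mono (fun x hx => lt_of_lt_of_le hhalfpos hx.1))
    have hu0 : 0 < u := lt_of_lt_of_le hhalfpos hu.1
    have hsub : I t - I (t/2) = ∫ v in (t/2)..t, h v :=
      intervalIntegral.integral_interval_sub_left (hIint 1 t one_pos ht0)
        (hIint 1 (t/2) one_pos hhalfpos)
    have hint : (t - t/2) * h u ≤ I t - I (t/2) := by
      rw [hsub]
      calc (t - t/2) * h u = ∫ _ in (t/2)..t, h u := by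
            rw [intervalIntegral.integral_const, smul_eq_mul]
      _ ≤ ∫ v in (t/2)..t, h v := by
            apply intervalIntegral.integral_mono_on (by linarith)
              intervalIntegrable_const (hIint (t/2) t hhalfpos ht0)
            intro x hx
            exact humin hx
    have hbddb : BddBelow ((fun u => ‖f' (X u)‖ ^ 2) '' Set.Icc 0 t) := by
      refine ⟨0, ?_⟩
      rintro _ ⟨v, _, rfl⟩
      positivity
    have hmem : ‖f' (X u)‖ ^ 2 ∈ (fun u => ‖f' (X u)‖ ^ 2) '' Set.Icc 0 t :=
      ⟨u, ⟨by linarith [hu.1], hu.2⟩, rfl⟩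
    have hsinf : sInf ((fun u => ‖f' (X u)‖ ^ 2) '' Set.Icc 0 t) ≤ ‖f' (X u)‖ ^ 2 :=
      csInf_le hbddb hmem
    have hN : (0:ℝ) ≤ ‖f' (X u)‖ ^ 2 := by positivity
    have hu2 : (t/2)^2 ≤ u^2 := by nlinarith [hu.1]
    have hhu : h u = u^2 * ‖f' (X u)‖^2 := by simp only [hh]
    have hstep : (t/2) * ((t/2)^2 * ‖f' (X u)‖^2) ≤ I t - I (t/2) := by
      calc (t/2) * ((t/2)^2 * ‖f' (X u)‖^2) ≤ (t/2) * (u^2 * ‖f' (X u)‖^2) := by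
            apply mul_le_mul_of_nonneg_left _ (by linarith)
            exact mul_le_mul_of_nonneg_right hu2 hN
      _ = (t - t/2) * h u := by rw [hhu]; ring
      _ ≤ I t - I (t/2) := hint
    have hchain : t^3 * sInf ((fun u => ‖f' (X u)‖ ^ 2) '' Set.Icc 0 t)
        ≤ t^3 * ‖f' (X u)‖^2 :=
      mul_le_mul_of_nonneg_left hsinf (by positivity)
    nlinarith [hstep, hchain]
  · have := htail.const_mul (8:ℝ)
    simpa using this
end
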